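/- Let M be a compact metric space and let c : M × M → ℝ be continuous. For Borel probability measures μ, ν on M set C(μ,ν) = inf_Π ∫_{M×M} c(x,y) dΠ(x,y), the infimum over all Borel probability measures Π on M × M whose marginal under the first projection is μ and under the second projection is ν. Then there exists a Borel probability measure μ on M achieving inf_ν C(ν,ν), the infimum over all Borel probability measures ν on M. -/

import Mathlib

open MeasureTheory

/-- A coupling of two Borel probability measures: a probability measure on `M × M`
whose first marginal is `μ` and second marginal is `ν`. -/
def IsCoupling {M : Type*} [MeasurableSpace M]
    (P : Measure (M × M)) (μ ν : Measure M) : Prop :=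
  P.map Prod.fst = μ ∧ P.map Prod.snd = ν

/-- The Monge–Kantorovich optimal transportation cost `C(μ,ν)`:
the infimum of `∫ c dΠ` over all couplings `Π` of `μ` and `ν`. -/
noncomputable def transportCost {M : Type*} [MeasurableSpace M]
    (c : M → M → ℝ) (μ ν : Measure M) : ℝ :=
  sInf {r : ℝ | ∃ P : Measure (M × M), IsProbabilityMeasure P ∧ IsCoupling P μ ν ∧
    r = ∫ p, c p.1 p.2 ∂P}

open Filter Topology TopologicalSpace Metric
open scoped ENNReal NNReal
set_option linter.unusedSectionVars false
section
variable {X : Type*} [MetricSpace X] [CompactSpace X] [Nonempty X] [MeasurableSpace X] [BorelSpace X]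

lemma cover_lemma (xs : ℕ → X) (hxs : DenseRange xs) {K G : Set X} (hK : IsCompact K)
    (hG : IsOpen G) (hKG : K ⊆ G) :
    ∃ s : Finset (ℕ × ℚ), (K ⊆ ⋃ p ∈ s, Metric.ball (xs p.1) (p.2 : ℝ)) ∧
      (⋃ p ∈ s, Metric.ball (xs p.1) (p.2 : ℝ)) ⊆ G := by
  set ι' := {p : ℕ × ℚ // Metric.ball (xs p.1) (p.2 : ℝ) ⊆ G}
  have hcov : K ⊆ ⋃ i : ι', Metric.ball (xs i.1.1) (i.1.2 : ℝ) := by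
    intro y hy
    obtain ⟨ε, εpos, hball⟩ := Metric.isOpen_iff.mp hG y (hKG hy)
    obtain ⟨n, hn⟩ := hxs.exists_dist_lt y (by positivity : (0:ℝ) < ε/4)
    obtain ⟨q, hq1, hq2⟩ := exists_rat_btwn (by linarith : ε/4 < ε/2)
    have hsub : Metric.ball (xs n) (q : ℝ) ⊆ G := by
      intro z hz
      apply hball
      simp only [Metric.mem_ball] at hz ⊢
      have h1 := dist_triangle z (xs n) y
      have hn' : dist (xs n) y < ε/4 := by rw [dist_comm]; exact hn
      linarith
    refine Set.mem_iUnion.mpr ⟨⟨(n, q), hsub⟩, ?_⟩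
    simp only [Metric.mem_ball]
    linarith
  obtain ⟨t, ht⟩ := hK.elim_finite_subcover (fun i : ι' => Metric.ball (xs i.1.1) (i.1.2 : ℝ))
    (fun _ => Metric.isOpen_ball) hcov
  refine ⟨t.image Subtype.val, ?_, ?_⟩
  · intro y hy
    obtain ⟨i, hit, hyi⟩ := Set.mem_iUnion₂.mp (ht hy)
    exact Set.mem_iUnion₂.mpr ⟨i.1, Finset.mem_image_of_mem _ hit, hyi⟩
  · intro y hy
    obtain ⟨p, hpt, hyp⟩ := Set.mem_iUnion₂.mp hy
    obtain ⟨i, _, rfl⟩ := Finset.mem_image.mp hpt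
    exact i.2 hyp

lemma exists_conv_subseq (μs : ℕ → ProbabilityMeasure X) :
    ∃ ν : ProbabilityMeasure X, ∃ φ : ℕ → ℕ, StrictMono φ ∧
      Tendsto (μs ∘ φ) atTop (𝓝 ν) := by
  classical
  set xs : ℕ → X := TopologicalSpace.denseSeq X with hxs_def
  have hxs : DenseRange xs := TopologicalSpace.denseRange_denseSeq X
  set U : Finset (ℕ × ℚ) → Set X := fun s => ⋃ p ∈ s, Metric.ball (xs p.1) (p.2 : ℝ) with hU_def
  have hUopen : ∀ s, IsOpen (U s) := fun s =>
    isOpen_biUnion fun _ _ => Metric.isOpen_ball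
  have hUunion : ∀ s t, U (s ∪ t) = U s ∪ U t := fun s t => by
    simp [hU_def, Finset.set_biUnion_union]
  -- the sequence of evaluations
  set F : ℕ → (Finset (ℕ × ℚ) → ℝ) := fun n s => ((μs n : Measure X) (U s)).toReal with hF_def
  have hF01 : ∀ n, F n ∈ Set.univ.pi (fun _ : Finset (ℕ × ℚ) => Set.Icc (0:ℝ) 1) := by
    intro n s _
    refine ⟨ENNReal.toReal_nonneg, ?_⟩
    have h1 : (μs n : Measure X) (U s) ≤ 1 := prob_le_one
    calc ((μs n : Measure X) (U s)).toReal ≤ (1 : ℝ≥0∞).toReal :=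
          ENNReal.toReal_mono (by simp) h1
      _ = 1 := by simp
  obtain ⟨L, hLmem, φ, hφ, hconv⟩ :=
    (isCompact_univ_pi (fun _ : Finset (ℕ × ℚ) => isCompact_Icc)).tendsto_subseq hF01
  have hL : ∀ s, Tendsto (fun n => F (φ n) s) atTop (𝓝 (L s)) := by
    intro s
    exact (tendsto_pi_nhds.mp hconv) s
  have hL0 : ∀ s, 0 ≤ L s := fun s => (hLmem s trivial).1
  -- admissible sets
  set Sa : Set X → Set ℝ≥0 := fun K => {r : ℝ≥0 | ∃ s, K ⊆ U s ∧ r = (L s).toNNReal}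
    with hSa_def
  have hSane : ∀ {K : Set X}, IsCompact K → (Sa K).Nonempty := by
    intro K hK
    obtain ⟨s, hs1, _⟩ := cover_lemma xs hxs hK isOpen_univ (Set.subset_univ K)
    exact ⟨(L s).toNNReal, s, hs1, rfl⟩
  -- monotone limit facts
  have hLle : ∀ s t, U s ⊆ U t → L s ≤ L t := by
    intro s t hst
    refine le_of_tendsto_of_tendsto' (hL s) (hL t) fun n => ?_
    exact ENNReal.toReal_mono (measure_ne_top _ _) (measure_mono hst)
  have hLsub : ∀ s t, L (s ∪ t) ≤ L s + L t := by
    intro s t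
    refine le_of_tendsto_of_tendsto' (hL (s ∪ t)) ((hL s).add (hL t)) fun n => ?_
    have : (μs (φ n) : Measure X) (U (s ∪ t)) ≤
        (μs (φ n) : Measure X) (U s) + (μs (φ n) : Measure X) (U t) := by
      rw [hUunion]; exact measure_union_le _ _
    calc ((μs (φ n) : Measure X) (U (s ∪ t))).toReal
        ≤ ((μs (φ n) : Measure X) (U s) + (μs (φ n) : Measure X) (U t)).toReal :=
          ENNReal.toReal_mono (ENNReal.add_ne_top.2 ⟨measure_ne_top _ _, measure_ne_top _ _⟩) this
      _ = F (φ n) s + F (φ n) t := ENNReal.toReal_add (measure_ne_top _ _) (measure_ne_top _ _)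
  have hsuple : ∀ K₁ K₂ : Compacts X, sInf (Sa ((K₁ ⊔ K₂ : Compacts X) : Set X))
      ≤ sInf (Sa (K₁ : Set X)) + sInf (Sa (K₂ : Set X)) := by
        intro K₁ K₂
        refine _root_.le_of_forall_pos_le_add ?_
        intro ε εpos
        obtain ⟨r₁, hr₁mem, hr₁⟩ := exists_lt_of_csInf_lt (hSane K₁.2)
          (lt_add_of_pos_right _ (half_pos εpos) :
            sInf (Sa (K₁ : Set X)) < sInf (Sa (K₁ : Set X)) + ε/2)
        obtain ⟨r₂, hr₂mem, hr₂⟩ := exists_lt_of_csInf_lt (hSane K₂.2)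
          (lt_add_of_pos_right _ (half_pos εpos) :
            sInf (Sa (K₂ : Set X)) < sInf (Sa (K₂ : Set X)) + ε/2)
        obtain ⟨s₁, hs₁, rfl⟩ := hr₁mem
        obtain ⟨s₂, hs₂, rfl⟩ := hr₂mem
        have hcov : ((K₁ ⊔ K₂ : Compacts X) : Set X) ⊆ U (s₁ ∪ s₂) := by
          rw [hUunion, Compacts.coe_sup]
          exact Set.union_subset_union hs₁ hs₂
        have h1 : sInf (Sa ((K₁ ⊔ K₂ : Compacts X) : Set X)) ≤ (L (s₁ ∪ s₂)).toNNReal :=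
          csInf_le (OrderBot.bddBelow _) ⟨s₁ ∪ s₂, hcov, rfl⟩
        have h2 : (L (s₁ ∪ s₂)).toNNReal ≤ (L s₁).toNNReal + (L s₂).toNNReal := by
          rw [← Real.toNNReal_add (hL0 s₁) (hL0 s₂)]
          exact Real.toNNReal_mono (hLsub s₁ s₂)
        calc sInf (Sa ((K₁ ⊔ K₂ : Compacts X) : Set X)) ≤ (L s₁).toNNReal + (L s₂).toNNReal :=
              h1.trans h2
          _ ≤ (sInf (Sa (K₁ : Set X)) + ε/2) + (sInf (Sa (K₂ : Set X)) + ε/2) :=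
              add_le_add hr₁.le hr₂.le
          _ = sInf (Sa (K₁ : Set X)) + sInf (Sa (K₂ : Set X)) + ε := by
              rw [add_add_add_comm, add_halves]
  -- the content
  set lam : Content X :=
    { toFun := fun K => sInf (Sa (K : Set X))
      mono' := by
        intro K₁ K₂ h
        refine csInf_le_csInf (OrderBot.bddBelow _) (hSane K₂.2) ?_
        rintro r ⟨s, hs, rfl⟩
        exact ⟨s, h.trans hs, rfl⟩
      sup_le' := fun K₁ K₂ => hsuple K₁ K₂
      sup_disjoint' := by
        intro K₁ K₂ hd _ _
        refine le_antisymm (hsuple K₁ K₂) ?_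
        · -- hard direction
          obtain ⟨δ, δpos, hδ⟩ := hd.exists_thickenings K₁.2 K₂.2.isClosed
          refine le_csInf (hSane (K₁ ⊔ K₂).2) ?_
          rintro r ⟨s, hcov, rfl⟩
          have hcov' : ((K₁ : Set X) ∪ (K₂ : Set X)) ⊆ U s := by
            rw [← Compacts.coe_sup]; exact hcov
          have hK₁sub : (K₁ : Set X) ⊆ U s ∩ thickening δ (K₁ : Set X) :=
            Set.subset_inter (fun x hx => hcov' (Or.inl hx)) (self_subset_thickening δpos _)
          have hK₂sub : (K₂ : Set X) ⊆ U s ∩ thickening δ (K₂ : Set X) :=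
            Set.subset_inter (fun x hx => hcov' (Or.inr hx)) (self_subset_thickening δpos _)
          obtain ⟨s₁, hs₁, hs₁sub⟩ := cover_lemma xs hxs K₁.2
            ((hUopen s).inter isOpen_thickening) hK₁sub
          obtain ⟨s₂, hs₂, hs₂sub⟩ := cover_lemma xs hxs K₂.2
            ((hUopen s).inter isOpen_thickening) hK₂sub
          have hdisjU : Disjoint (U s₁) (U s₂) :=
            hδ.mono (hs₁sub.trans Set.inter_subset_right)
              (hs₂sub.trans Set.inter_subset_right)
          have hLsum : L s₁ + L s₂ ≤ L s := by
            refine le_of_tendsto_of_tendsto' ((hL s₁).add (hL s₂)) (hL s) fun n => ?_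
            have hm : (μs (φ n) : Measure X) (U s₁) + (μs (φ n) : Measure X) (U s₂)
                = (μs (φ n) : Measure X) (U s₁ ∪ U s₂) :=
              (measure_union hdisjU (hUopen s₂).measurableSet).symm
            have hm2 : (μs (φ n) : Measure X) (U s₁ ∪ U s₂)
                ≤ (μs (φ n) : Measure X) (U s) :=
              measure_mono (Set.union_subset (hs₁sub.trans Set.inter_subset_left)
                (hs₂sub.trans Set.inter_subset_left))
            calc F (φ n) s₁ + F (φ n) s₂
                = ((μs (φ n) : Measure X) (U s₁) + (μs (φ n) : Measure X) (U s₂)).toReal :=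
                  (ENNReal.toReal_add (measure_ne_top _ _) (measure_ne_top _ _)).symm
              _ = ((μs (φ n) : Measure X) (U s₁ ∪ U s₂)).toReal := by rw [hm]
              _ ≤ F (φ n) s := ENNReal.toReal_mono (measure_ne_top _ _) hm2
          calc sInf (Sa (K₁ : Set X)) + sInf (Sa (K₂ : Set X))
              ≤ (L s₁).toNNReal + (L s₂).toNNReal :=
                add_le_add (csInf_le (OrderBot.bddBelow _) ⟨s₁, hs₁, rfl⟩)
                  (csInf_le (OrderBot.bddBelow _) ⟨s₂, hs₂, rfl⟩)
            _ = (L s₁ + L s₂).toNNReal := (Real.toNNReal_add (hL0 _) (hL0 _)).symm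
            _ ≤ (L s).toNNReal := Real.toNNReal_mono hLsum }
    with hlam_def
  -- total mass one
  have h1univ : lam.toFun ⟨Set.univ, isCompact_univ⟩ = 1 := by
    obtain ⟨s₀, hs₀, _⟩ := cover_lemma xs hxs isCompact_univ isOpen_univ subset_rfl
    have hall : ∀ s : Finset (ℕ × ℚ), Set.univ ⊆ U s → L s = 1 := by
      intro s hs
      have hUs : U s = Set.univ := Set.eq_univ_of_univ_subset hs
      have hFs : ∀ n, F (φ n) s = 1 := fun n => by
        simp only [hF_def, hUs, measure_univ, ENNReal.toReal_one]
      refine tendsto_nhds_unique (hL s) ?_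
      simp only [hFs]
      exact tendsto_const_nhds
    refine le_antisymm ?_ ?_
    · have hmem : ((L s₀).toNNReal) ∈ Sa (Set.univ : Set X) := ⟨s₀, hs₀, rfl⟩
      have hle := csInf_le (OrderBot.bddBelow _) hmem
      have : lam.toFun ⟨Set.univ, isCompact_univ⟩ = sInf (Sa (Set.univ : Set X)) := rfl
      rw [this]
      rwa [hall s₀ hs₀, Real.toNNReal_one] at hle
    · refine le_csInf (hSane isCompact_univ) ?_
      rintro r ⟨s, hs, rfl⟩
      rw [hall s hs, Real.toNNReal_one]
  have hmeas_univ : lam.measure Set.univ = 1 := by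
    rw [lam.measure_apply MeasurableSet.univ, lam.outerMeasure_of_isOpen _ isOpen_univ]
    rw [lam.innerContent_of_isCompact isCompact_univ isOpen_univ]
    rw [show lam ⟨Set.univ, isCompact_univ⟩ = (lam.toFun ⟨Set.univ, isCompact_univ⟩ : ℝ≥0∞) from rfl, h1univ]
    simp
  haveI hprob : IsProbabilityMeasure lam.measure := ⟨hmeas_univ⟩
  set ν : ProbabilityMeasure X := ⟨lam.measure, hprob⟩ with hν_def
  refine ⟨ν, φ, hφ, ?_⟩
  have key : ∀ G : Set X, IsOpen G →
      ν G ≤ liminf (fun i => (μs (φ i)) G) atTop := by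
    intro G hG
    set cl := liminf (fun i => (μs (φ i)) G) atTop with hcl_def
    have hstep : ∀ K : Compacts X, (K : Set X) ⊆ G → (lam.toFun K : ℝ≥0) ≤ cl := by
      intro K hKG
      obtain ⟨s, hKs, hsG⟩ := cover_lemma xs hxs K.2 hG hKG
      have h1 : lam.toFun K ≤ (L s).toNNReal := csInf_le (OrderBot.bddBelow _) ⟨s, hKs, rfl⟩
      have ha : Tendsto (fun i => (μs (φ i)) (U s)) atTop (𝓝 (L s).toNNReal) := by
        rw [← NNReal.tendsto_coe, Real.coe_toNNReal _ (hL0 s)]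
        exact hL s
      have h2 : (L s).toNNReal ≤ cl := by
        rw [← ha.liminf_eq]
        refine liminf_le_liminf
          (Eventually.of_forall fun i => (μs (φ i)).apply_mono hsG) ?_ ?_
        · exact isBoundedUnder_of ⟨0, fun _ => zero_le⟩
        · exact (isBoundedUnder_of
            ⟨1, fun i => ProbabilityMeasure.apply_le_one _ _⟩).isCoboundedUnder_ge
      exact h1.trans h2
    rw [← ENNReal.coe_le_coe, ProbabilityMeasure.ennreal_coeFn_eq_coeFn_toMeasure]
    show (ν : Measure X) G ≤ (cl : ℝ≥0∞)
    have hν : (ν : Measure X) = lam.measure := rfl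
    rw [hν]
    rw [lam.measure_apply hG.measurableSet, lam.outerMeasure_of_isOpen _ hG]
    exact iSup₂_le fun K hK => ENNReal.coe_le_coe.2 (hstep K hK)
  exact MeasureTheory.tendsto_of_forall_isOpen_le_liminf key

lemma probMeasure_compactSpace : CompactSpace (ProbabilityMeasure X) := by
  have hseq : IsSeqCompact (Set.univ : Set (ProbabilityMeasure X)) := by
    intro x _
    obtain ⟨ν, φ, hφ, hconv⟩ := exists_conv_subseq x
    exact ⟨ν, trivial, φ, hφ, hconv⟩
  set h := LevyProkhorov.probabilityMeasureHomeomorph (Ω := X)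
  have hseqLP : IsSeqCompact (Set.univ : Set (LevyProkhorov (ProbabilityMeasure X))) := by
    intro y _
    obtain ⟨a, _, φ, hφ, hc⟩ := hseq (x := fun n => h.symm (y n)) (fun _ => trivial)
    refine ⟨h a, trivial, φ, hφ, ?_⟩
    have := (h.continuous.tendsto a).comp hc
    convert this using 1
    funext n; simp
  have : IsCompact (Set.univ : Set (LevyProkhorov (ProbabilityMeasure X))) :=
    hseqLP.isCompact
  have : CompactSpace (LevyProkhorov (ProbabilityMeasure X)) := ⟨this⟩
  exact h.symm.compactSpace
end

/-- **Existence of a minimizing measure** (Lemma `costcovex`): on a compact metric space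
`M` with continuous cost `c : M × M → ℝ`, there is a Borel probability measure `μ`
achieving `inf_ν C(ν,ν)` over all Borel probability measures `ν` on `M`. -/
theorem exists_minimizing_measure
    (M : Type*) [MetricSpace M] [CompactSpace M] [Nonempty M]
    [MeasurableSpace M] [BorelSpace M]
    (c : M → M → ℝ) (hc : Continuous fun p : M × M => c p.1 p.2) :
    ∃ μ : Measure M, IsProbabilityMeasure μ ∧
      ∀ ν : Measure M, IsProbabilityMeasure ν →
        transportCost c μ μ ≤ transportCost c ν ν := by
  haveI := probMeasure_compactSpace (X := M × M)
  set f : BoundedContinuousFunction (M × M) ℝ :=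
    BoundedContinuousFunction.mkOfCompact ⟨fun p => c p.1 p.2, hc⟩ with hf_def
  set Gf : ProbabilityMeasure (M × M) → ℝ :=
    fun P => ∫ p, c p.1 p.2 ∂(P : Measure (M × M)) with hGf_def
  have hGcont : Continuous Gf := by
    rw [continuous_iff_continuousAt]
    intro μ
    have h2 := (ProbabilityMeasure.tendsto_iff_forall_integral_tendsto
      (μs := (id : ProbabilityMeasure (M × M) → ProbabilityMeasure (M × M)))
      (F := 𝓝 μ) (μ := μ)).mp tendsto_id f
    exact h2
  set S : Set (ProbabilityMeasure (M × M)) :=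
    {P | ProbabilityMeasure.map P (continuous_fst.measurable.aemeasurable)
        = ProbabilityMeasure.map P (continuous_snd.measurable.aemeasurable)} with hS_def
  have hSclosed : IsClosed S := isClosed_eq
    (ProbabilityMeasure.continuous_map continuous_fst)
    (ProbabilityMeasure.continuous_map continuous_snd)
  have hSmem : ∀ P : ProbabilityMeasure (M × M), P ∈ S ↔
      (P : Measure (M × M)).map Prod.fst = (P : Measure (M × M)).map Prod.snd := by
    intro P
    constructor
    · intro h
      have := congrArg (fun m : ProbabilityMeasure M => (m : Measure M)) h
      simpa [ProbabilityMeasure.toMeasure_map] using this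
    · intro h
      apply ProbabilityMeasure.toMeasure_injective
      rw [ProbabilityMeasure.toMeasure_map, ProbabilityMeasure.toMeasure_map]
      exact h
  obtain ⟨x₀⟩ := ‹Nonempty M›
  set P₀ : ProbabilityMeasure (M × M) := ⟨Measure.dirac (x₀, x₀), inferInstance⟩ with hP₀_def
  have hP₀ : P₀ ∈ S := by
    refine (hSmem P₀).mpr ?_
    show (Measure.dirac (x₀, x₀)).map Prod.fst = (Measure.dirac (x₀, x₀)).map Prod.snd
    rw [Measure.map_dirac' measurable_fst, Measure.map_dirac' measurable_snd]
  obtain ⟨P, hPS, hPmin⟩ := hSclosed.isCompact.exists_isMinOn ⟨P₀, hP₀⟩ hGcont.continuousOn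
  have hm : (P : Measure (M × M)).map Prod.fst = (P : Measure (M × M)).map Prod.snd :=
    (hSmem P).mp hPS
  refine ⟨(P : Measure (M × M)).map Prod.fst,
    Measure.isProbabilityMeasure_map measurable_fst.aemeasurable, ?_⟩
  intro ν hν
  haveI := hν
  have hlb : ∀ Q : Measure (M × M), IsProbabilityMeasure Q → -‖f‖ ≤ ∫ p, c p.1 p.2 ∂Q := by
    intro Q hQ
    haveI := hQ
    have h2 : (-‖f‖ : ℝ) = ∫ _, (-‖f‖) ∂Q := by simp
    rw [h2]
    refine integral_mono (integrable_const _) (f.integrable Q) ?_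
    intro p
    exact (abs_le.mp (f.norm_coe_le_norm p)).1
  have hstep1 : transportCost c ((P : Measure (M × M)).map Prod.fst)
      ((P : Measure (M × M)).map Prod.fst) ≤ Gf P := by
    refine csInf_le ⟨-‖f‖, ?_⟩ ⟨(P : Measure (M × M)), P.2, ⟨rfl, hm.symm⟩, rfl⟩
    rintro r ⟨Q, hQ, -, rfl⟩
    exact hlb Q hQ
  have hd : Measurable (fun x : M => (x, x)) := measurable_id.prodMk measurable_id
  have hstep2 : Gf P ≤ transportCost c ν ν := by
    refine le_csInf ?_ ?_
    · refine ⟨∫ p, c p.1 p.2 ∂(ν.map (fun x => (x, x))), ν.map (fun x => (x, x)),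
        Measure.isProbabilityMeasure_map hd.aemeasurable,
        ⟨?_, ?_⟩, rfl⟩
      · rw [Measure.map_map measurable_fst hd]
        exact Measure.map_id
      · rw [Measure.map_map measurable_snd hd]
        exact Measure.map_id
    · rintro r ⟨Q, hQprob, ⟨h1, h2⟩, rfl⟩
      have hQS : (⟨Q, hQprob⟩ : ProbabilityMeasure (M × M)) ∈ S := by
        refine (hSmem _).mpr ?_
        show Q.map Prod.fst = Q.map Prod.snd
        rw [h1, h2]
      exact hPmin hQS
  exact hstep1.trans hstep2
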